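/- (Macchi) Let X be a finite set and L an X × X matrix with det(1+L) ≠ 0, defining the L-ensemble Pr{Y} = det L_Y / det(1+L) on subsets Y ⊆ X. Then for every subset A = {a_1,...,a_n} ⊆ X, the correlation function ρ(A) = Σ_{Y ⊇ A} Pr{Y} equals det[K(a_i,a_j)]_{i,j=1}^n where K = L(1+L)^{-1}. -/

import Mathlib

/-- Principal minor of `L` on the rows and columns indexed by the subset `S`. -/
noncomputable def minorDet {X : Type*} [Fintype X] [DecidableEq X]
    (L : Matrix X X ℂ) (S : Finset X) : ℂ :=
  Matrix.det (Matrix.of fun i j : S => L i j)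

open Finset Matrix

lemma det_unitRows {X : Type*} [Fintype X] [DecidableEq X]
    (M : Matrix X X ℂ) (s : Finset X) :
    Matrix.det (Matrix.of fun i j : X =>
        if i ∈ s then (if i = j then (1:ℂ) else 0) else M i j) = minorDet M sᶜ := by
  classical
  set N : Matrix X X ℂ := Matrix.of fun i j : X =>
    if i ∈ s then (if i = j then (1:ℂ) else 0) else M i j with hN
  let e : {x // x ∈ s} ⊕ {x // ¬ x ∈ s} ≃ X := Equiv.sumCompl _
  rw [← Matrix.det_submatrix_equiv_self e N]
  have hblock : N.submatrix e e =
      Matrix.fromBlocks 1 0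
        (Matrix.of fun (i : {x // ¬ x ∈ s}) (j : {x // x ∈ s}) => M i.1 j.1)
        (Matrix.of fun (i j : {x // ¬ x ∈ s}) => M i.1 j.1) := by
    ext i j
    cases i with
    | inl i =>
      cases j with
      | inl j =>
        simp [hN, e, Matrix.fromBlocks, Matrix.one_apply, i.2, Subtype.ext_iff.symm]
      | inr j =>
        have : ¬ (i.1 = j.1) := fun h => j.2 (h ▸ i.2)
        simp [hN, e, Matrix.fromBlocks, i.2, this]
    | inr i =>
      cases j with
      | inl j => simp [hN, e, Matrix.fromBlocks, i.2]
      | inr j => simp [hN, e, Matrix.fromBlocks, i.2]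
  rw [hblock, Matrix.det_fromBlocks_zero₁₂, Matrix.det_one, one_mul]
  unfold minorDet
  rw [← Matrix.det_submatrix_equiv_self
    (Equiv.subtypeEquivRight (fun x => Finset.mem_compl (s := s)) :
      {x // x ∈ sᶜ} ≃ {x // ¬ x ∈ s})]
  rfl

lemma sum_minor_eq {X : Type*} [Fintype X] [DecidableEq X]
    (L : Matrix X X ℂ) (A : Finset X) :
    ∑ S ∈ Finset.univ.filter (fun S : Finset X => A ⊆ S), minorDet L S =
      Matrix.det (Matrix.of fun i j : X =>
        (if i ∈ A then 0 else if i = j then (1:ℂ) else 0) + L i j) := by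
  classical
  set Drows : X → X → ℂ := fun i j => if i ∈ A then 0 else if i = j then (1:ℂ) else 0
  set Lrows : X → X → ℂ := fun i => L i
  have h1 : Matrix.det (Matrix.of fun i j : X => Drows i j + L i j)
      = Matrix.detRowAlternating (Drows + Lrows) := rfl
  have h2 : Matrix.detRowAlternating (Drows + Lrows)
      = ∑ s : Finset X, Matrix.detRowAlternating (s.piecewise Drows Lrows) :=
    MultilinearMap.map_add_univ
      (Matrix.detRowAlternating (R := ℂ) (n := X)).toMultilinearMap Drows Lrows
  rw [h1, h2]
  have key : ∀ s : Finset X,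
      Matrix.detRowAlternating (s.piecewise Drows Lrows) =
        if Disjoint s A then minorDet L sᶜ else 0 := by
    intro s
    by_cases hd : Disjoint s A
    · rw [if_pos hd]
      have : (s.piecewise Drows Lrows) = Matrix.of fun i j : X =>
          if i ∈ s then (if i = j then (1:ℂ) else 0) else L i j := by
        funext i j
        by_cases hi : i ∈ s
        · have hiA : i ∉ A := fun h => (Finset.disjoint_left.mp hd hi) h
          simp [Finset.piecewise_eq_of_mem _ _ _ hi, Drows, hiA, hi]
        · simp [Finset.piecewise_eq_of_notMem _ _ _ hi, Lrows, hi]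
      rw [this]
      exact det_unitRows L s
    · rw [if_neg hd]
      obtain ⟨i0, hi0s, hi0A⟩ := Finset.not_disjoint_iff.mp hd
      have hz : (s.piecewise Drows Lrows) i0 = 0 := by
        funext j
        simp [Finset.piecewise_eq_of_mem _ _ _ hi0s, Drows, hi0A]
      exact (Matrix.detRowAlternating).map_coord_zero i0 hz
  simp only [key]
  rw [Finset.sum_ite, Finset.sum_const_zero, add_zero]
  rw [eq_comm]
  apply Finset.sum_nbij' (fun s => sᶜ) (fun S => Sᶜ)
  · intro s hs
    simp only [Finset.mem_filter, Finset.mem_univ, true_and]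
    simp only [Finset.mem_filter, Finset.mem_univ, true_and] at hs
    intro x hx
    simp only [Finset.mem_compl]
    exact fun hxs => Finset.disjoint_left.mp hs hxs hx
  · intro S hS
    simp only [Finset.mem_filter, Finset.mem_univ, true_and] at hS ⊢
    rw [Finset.disjoint_left]
    intro x hx
    simp only [Finset.mem_compl] at hx
    exact fun hxA => hx (hS hxA)
  · intro s _; exact compl_compl s
  · intro S _; exact compl_compl S
  · intro s _; rfl

theorem L_ensemble_determinantal {X : Type*} [Fintype X] [DecidableEq X] (L : Matrix X X ℂ)
    (hdet : Matrix.det (1 + L) ≠ 0)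
    (n : ℕ) (a : Fin n → X) (ha : Function.Injective a) :
    (∑ S ∈ Finset.univ.filter (fun S : Finset X => ∀ i, a i ∈ S), minorDet L S)
        / Matrix.det (1 + L)
    = Matrix.det (Matrix.of fun i j : Fin n => (L * (1 + L)⁻¹) (a i) (a j)) := by
  classical
  set A : Finset X := Finset.image a Finset.univ with hA
  have hfilter : (Finset.univ.filter (fun S : Finset X => ∀ i, a i ∈ S)) =
      (Finset.univ.filter (fun S : Finset X => A ⊆ S)) := by
    apply Finset.filter_congr
    intro S _
    simp [hA, Finset.image_subset_iff]
  rw [hfilter, sum_minor_eq L A]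
  -- the matrix D + L
  set DL : Matrix X X ℂ := Matrix.of fun i j : X =>
    (if i ∈ A then 0 else if i = j then (1:ℂ) else 0) + L i j with hDL
  have hunit : IsUnit (Matrix.det (1 + L)) := isUnit_iff_ne_zero.mpr hdet
  have hKform : ∀ i j : X, (L * (1 + L)⁻¹) i j =
      (if i = j then (1:ℂ) else 0) - (1 + L)⁻¹ i j := by
    intro i j
    have h1 : (1 + L) * (1 + L)⁻¹ = 1 := Matrix.mul_nonsing_inv _ hunit
    have : L * (1 + L)⁻¹ = 1 - (1 + L)⁻¹ := by
      have : (1 + L) * (1 + L)⁻¹ = (1 + L)⁻¹ + L * (1 + L)⁻¹ := by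
        rw [add_mul, one_mul]
      rw [this] at h1
      linear_combination (norm := noncomm_ring) h1
    rw [this]
    simp [Matrix.one_apply, Matrix.sub_apply]
  have hprod : DL * (1 + L)⁻¹ = Matrix.of fun i j : X =>
      if i ∈ Aᶜ then (if i = j then (1:ℂ) else 0) else (L * (1 + L)⁻¹) i j := by
    have hDLsplit : DL = (1 + L) - Matrix.of (fun i j : X =>
        if i ∈ A then (if i = j then (1:ℂ) else 0) else 0) := by
      ext i j
      by_cases hi : i ∈ A <;>
        simp [hDL, hi, Matrix.add_apply, Matrix.sub_apply, Matrix.one_apply]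
    rw [hDLsplit, Matrix.sub_mul, Matrix.mul_nonsing_inv _ hunit]
    ext i j
    have hP : ((Matrix.of (fun i j : X =>
        if i ∈ A then (if i = j then (1:ℂ) else 0) else 0)) * (1 + L)⁻¹) i j
        = if i ∈ A then (1 + L)⁻¹ i j else 0 := by
      rw [Matrix.mul_apply]
      by_cases hi : i ∈ A
      · rw [Finset.sum_eq_single i]
        · simp [hi]
        · intro b _ hb; simp [Ne.symm hb]
        · simp
      · simp [hi]
    rw [Matrix.sub_apply, hP]
    simp only [Matrix.of_apply, Matrix.one_apply, Finset.mem_compl]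
    by_cases hi : i ∈ A
    · simp only [hi, if_true, not_true, if_false]
      rw [hKform i j]
    · simp only [hi, if_false, not_false_iff, if_true, sub_zero]
  have hdiv : Matrix.det DL / Matrix.det (1 + L) = Matrix.det (DL * (1 + L)⁻¹) := by
    rw [Matrix.det_mul, Matrix.det_nonsing_inv, Ring.inverse_eq_inv', div_eq_mul_inv]
  rw [hdiv, hprod, det_unitRows, compl_compl]
  -- now reindex the minor on A by Fin n
  unfold minorDet
  let e : Fin n ≃ {x // x ∈ A} :=
    (Equiv.ofInjective a ha).trans (Equiv.subtypeEquivRight (fun x => by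
      simp [hA, Set.mem_range, eq_comm]))
  have he : ∀ i : Fin n, ((e i : {x // x ∈ A}) : X) = a i := by
    intro i
    simp [e, Equiv.subtypeEquivRight, Equiv.ofInjective_apply]
    rfl
  rw [← Matrix.det_submatrix_equiv_self e]
  congr 1
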